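/- Let Γ be a profinite group, Δ ≤ Γ a closed subgroup, X a discrete smooth Δ-module, and let r: Γ → Δ, s: Γ → Γ be a continuous factorization γ = r(γ)s(γ) as in the Shapiro-section setup (with r left-Δ-equivariant, continuous in the inverse-limit sense). Define, for a continuous homogeneous k-cochain c ∈ C^k(Δ, X), the function S(c)(σ₀,…,σ_k)(a) = r(a)·c(r(a)⁻¹r(aσ₀), …, r(a)⁻¹r(aσ_k)). Then: (1) for fixed σ₀,…,σ_k ∈ Γ, the map a ↦ S(c)(σ₀,…,σ_k)(a) is continuous and satisfies S(c)(σ₀,…,σ_k)(δa) = δ·S(c)(σ₀,…,σ_k)(a) for δ ∈ Δ, hence lies in the smooth induction Ind_Δ^Γ X; (2) S(c) is Γ-equivariant: S(c)(τσ₀,…,τσ_k)(a) = S(c)(σ₀,…,σ_k)(aτ) for all τ ∈ Γ, so S(c) ∈ C^k(Γ, Ind_Δ^Γ X) (homogeneous cochains). -/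
import Mathlib


/-- The explicit Shapiro map on homogeneous cochains:
`S(c)(σ₀,…,σ_k)(a) = r(a) • c (r(a)⁻¹ r(aσ₀), …, r(a)⁻¹ r(aσ_k))`. -/
def shap {Γ : Type} [Group Γ] {Δ : Subgroup Γ} {X : Type} [AddCommGroup X]
    [DistribMulAction Δ X] (r : Γ → Δ) {k : ℕ}
    (c : (Fin (k + 1) → Δ) → X) : (Fin (k + 1) → Γ) → Γ → X :=
  fun σ a => r a • c (fun j => (r a)⁻¹ * r (a * σ j))

/-- Lemma B.3: the Shapiro map is well defined: for a continuous
`Δ`-equivariant homogeneous `k`-cochain `c` (inflated from a level `K`), the function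
`S(c)(σ₀,…,σ_k)` lies in the smooth induction `Ind_Δ^Γ X` (it is continuous and
`Δ`-equivariant in `a`), and `S(c)` is continuous and `Γ`-equivariant in `(σ₀,…,σ_k)`. -/
theorem stmt11
    (Γ : Type) [Group Γ] (Δ : Subgroup Γ) (K : Subgroup Γ) [K.Normal]
    (X : Type) [AddCommGroup X] [DistribMulAction Δ X]
    (r : Γ → Δ)
    (hreq : ∀ (δ : Δ) (γ : Γ), r ((δ : Γ) * γ) = δ * r γ)
    (hr1 : r 1 = 1)
    (hrK : ∀ a b : Γ, b ∈ K → ((r a : Γ))⁻¹ * (r (a * b) : Γ) ∈ K)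
    (k : ℕ) (c : (Fin (k + 1) → Δ) → X)
    (hc_equiv : ∀ (δ : Δ) (σ : Fin (k + 1) → Δ), c (fun j => δ * σ j) = δ • c σ)
    (hc_K : ∀ σ σ' : Fin (k + 1) → Δ,
      (∀ j, ((σ j : Γ))⁻¹ * ((σ' j : Γ)) ∈ K) → c σ = c σ')
    (hc_fix : ∀ δ : Δ, (δ : Γ) ∈ K → ∀ σ : Fin (k + 1) → Δ,
      c (fun j => δ * σ j) = c σ) :
    -- (1) each value is a smooth vector of the induced module:
    (∀ (σ : Fin (k + 1) → Γ) (a b : Γ), b ∈ K → shap r c σ (a * b) = shap r c σ a) ∧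
    (∀ (σ : Fin (k + 1) → Γ) (δ : Δ) (a : Γ),
      shap r c σ ((δ : Γ) * a) = δ • shap r c σ a) ∧
    -- (2) S(c) is a continuous Γ-equivariant homogeneous cochain:
    (∀ (σ : Fin (k + 1) → Γ) (τ : Γ) (a : Γ),
      shap r c (fun j => τ * σ j) a = shap r c σ (a * τ)) ∧
    (∀ (σ σ' : Fin (k + 1) → Γ) (a : Γ),
      (∀ j, (σ j)⁻¹ * σ' j ∈ K) → shap r c σ a = shap r c σ' a) := by
  refine ⟨?_, ?_, ?_, ?_⟩
  · -- right K-invariance in a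
    intro σ a b hb
    set δ : Δ := (r a)⁻¹ * r (a * b) with hδ
    have hrab : r (a * b) = r a * δ := by rw [hδ, mul_inv_cancel_left]
    have h1 : shap r c σ (a * b)
        = r a • c (fun j => δ * ((r (a * b))⁻¹ * r (a * b * σ j))) := by
      rw [hc_equiv δ, ← mul_smul, ← hrab, shap]
    rw [h1, shap]
    congr 1
    apply hc_K
    intro j
    have hbj : (σ j)⁻¹ * b * σ j ∈ K := by
      simpa using Subgroup.Normal.conj_mem' ‹K.Normal› b hb (σ j)
    have h2 := hrK (a * σ j) ((σ j)⁻¹ * b * σ j) hbj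
    have heq : a * σ j * ((σ j)⁻¹ * b * σ j) = a * b * σ j := by group
    rw [heq] at h2
    have h3 : ((δ * ((r (a * b))⁻¹ * r (a * b * σ j)) : Δ) : Γ)
        = ((r a : Γ))⁻¹ * (r (a * b * σ j) : Γ) := by
      push_cast [hδ]
      group
    rw [h3]
    push_cast
    have h4 : (((r a : Γ))⁻¹ * (r (a * b * σ j) : Γ))⁻¹
        * (((r a : Γ))⁻¹ * (r (a * σ j) : Γ))
        = ((r (a * b * σ j) : Γ))⁻¹ * (r (a * σ j) : Γ) := by group
    rw [h4]
    simpa using K.inv_mem h2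
  · -- Δ-equivariance in a
    intro σ δ a
    have harg : (fun j => (r ((δ : Γ) * a))⁻¹ * r ((δ : Γ) * a * σ j))
        = fun j => (r a)⁻¹ * r (a * σ j) := by
      funext j
      rw [mul_assoc, hreq, hreq]
      group
    rw [shap, shap, harg, hreq, mul_smul]
  · -- Γ-equivariance
    intro σ τ a
    set ε : Δ := (r a)⁻¹ * r (a * τ) with hε
    have hrat : r (a * τ) = r a * ε := by rw [hε, mul_inv_cancel_left]
    have h1 : shap r c σ (a * τ)
        = r a • c (fun j => ε * ((r (a * τ))⁻¹ * r (a * τ * σ j))) := by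
      rw [hc_equiv ε, ← mul_smul, ← hrat, shap]
    rw [h1, shap]
    congr 1
    congr 1
    funext j
    rw [hε, show a * (τ * σ j) = a * τ * σ j from (mul_assoc a τ (σ j)).symm]
    group
  · -- continuity in σ
    intro σ σ' a h
    rw [shap, shap]
    congr 1
    apply hc_K
    intro j
    have h2 := hrK (a * σ j) ((σ j)⁻¹ * σ' j) (h j)
    have heq : a * σ j * ((σ j)⁻¹ * σ' j) = a * σ' j := by group
    rw [heq] at h2
    push_cast
    have h4 : (((r a : Γ))⁻¹ * (r (a * σ j) : Γ))⁻¹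
        * (((r a : Γ))⁻¹ * (r (a * σ' j) : Γ))
        = ((r (a * σ j) : Γ))⁻¹ * (r (a * σ' j) : Γ) := by group
    rw [h4]
    exact h2
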